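/- Let G = (V,A) be a finite simple graph without isolated vertices and n = n(G) = W ⊕ z its graph algebra over a field k of characteristic zero. Then (Λ²n)^n = Λ²z if and only if every vertex of G has degree at least 2. -/

import Mathlib

open TensorProduct

set_option synthInstance.maxHeartbeats 1000000
set_option maxHeartbeats 1000000

/-- The adjoint action of a Lie algebra `g` on `g ⊗ g`, determined by
`x · (a ⊗ b) = ⁅x,a⁆ ⊗ b + a ⊗ ⁅x,b⁆`. -/
noncomputable def tAct (k g : Type*) [CommRing k] [LieRing g] [LieAlgebra k g] (x : g) :
    g ⊗[k] g →ₗ[k] g ⊗[k] g :=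
  TensorProduct.map (LieAlgebra.ad k g x) LinearMap.id
    + TensorProduct.map LinearMap.id (LieAlgebra.ad k g x)

/-- For submodules `P Q ⊆ g`, the image of `P ⊗ Q` in `g ⊗ g`. -/
noncomputable def tsub (k g : Type*) [CommRing k] [AddCommGroup g] [Module k g]
    (P Q : Submodule k g) : Submodule k (g ⊗[k] g) :=
  LinearMap.range (TensorProduct.map P.subtype Q.subtype)

/-- The degree (valency) of a vertex `e` in the graph with edge set `A` and
endpoint maps `src`, `tgt`. -/
def deg {V A : Type*} [Fintype A] [DecidableEq V] (src tgt : A → V) (e : V) : ℕ :=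
  (Finset.univ.filter (fun a : A => src a = e ∨ tgt a = e)).card


set_option linter.unusedSectionVars false
set_option linter.unusedVariables false



section Graph
variable {k V A : Type*} [Field k] [CharZero k]
  [Fintype V] [Fintype A] [DecidableEq V] [DecidableEq A]

variable (src tgt : A → V)

def inc (a : A) (i : V) : Prop := src a = i ∨ tgt a = i

instance (a : A) (i : V) : Decidable (inc src tgt a i) := by unfold inc; infer_instance

def oth (a : A) (i : V) : V := if src a = i then tgt a else src a

variable (k) in
def eps (a : A) (i : V) : k := if src a = i then 1 else -1

variable {src tgt}

lemma inc_src (a : A) : inc src tgt a (src a) := Or.inl rfl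
lemma inc_tgt (a : A) : inc src tgt a (tgt a) := Or.inr rfl

section
variable (hloop : ∀ a, src a ≠ tgt a)
include hloop

lemma inc_oth {a : A} {i : V} (h : inc src tgt a i) : inc src tgt a (oth src tgt a i) := by
  unfold oth; split_ifs with hs
  · exact Or.inr rfl
  · exact Or.inl rfl

lemma oth_oth {a : A} {i : V} (h : inc src tgt a i) : oth src tgt a (oth src tgt a i) = i := by
  rcases h with h | h <;> subst h <;> simp [oth, hloop a]

lemma oth_ne {a : A} {i : V} (h : inc src tgt a i) : oth src tgt a i ≠ i := by
  rcases h with h | h <;> subst h <;> simp [oth, hloop a]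
  exact Ne.symm (hloop a)
end

lemma oth_eq {a : A} {i j : V} (hij : i ≠ j) (hi : inc src tgt a i) (hj : inc src tgt a j) :
    oth src tgt a i = j := by
  rcases hi with h | h <;> rcases hj with h' | h'
  · exact absurd (h.symm.trans h') hij
  · simp [oth, h, h']
  · have hs : src a ≠ i := by rw [h']; exact fun hh => hij hh.symm
    rw [oth, if_neg hs]; exact h'
  · exact absurd (h.symm.trans h') hij

lemma endpoints {a : A} {i j : V} (hij : i ≠ j) (hi : inc src tgt a i) (hj : inc src tgt a j) :
    (src a = i ∧ tgt a = j) ∨ (src a = j ∧ tgt a = i) := by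
  rcases hi with h | h <;> rcases hj with h' | h'
  · exact absurd (h.symm.trans h') hij
  · exact Or.inl ⟨h, h'⟩
  · exact Or.inr ⟨h', h⟩
  · exact absurd (h.symm.trans h') hij

lemma shareEdge (hsimple : ∀ a b : A,
      (src a = src b ∧ tgt a = tgt b) ∨ (src a = tgt b ∧ tgt a = src b) → a = b)
    {a b : A} {i j : V} (hij : i ≠ j)
    (hai : inc src tgt a i) (haj : inc src tgt a j)
    (hbi : inc src tgt b i) (hbj : inc src tgt b j) : a = b := by
  rcases endpoints hij hai haj with ⟨h1, h2⟩ | ⟨h1, h2⟩ <;>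
    rcases endpoints hij hbi hbj with ⟨h3, h4⟩ | ⟨h3, h4⟩
  · exact hsimple a b (Or.inl ⟨h1.trans h3.symm, h2.trans h4.symm⟩)
  · exact hsimple a b (Or.inr ⟨h1.trans h4.symm, h2.trans h3.symm⟩)
  · exact hsimple a b (Or.inr ⟨h1.trans h4.symm, h2.trans h3.symm⟩)
  · exact hsimple a b (Or.inl ⟨h1.trans h3.symm, h2.trans h4.symm⟩)

lemma eps_ne_zero (a : A) (i : V) : eps k src a i ≠ 0 := by
  unfold eps; split_ifs
  · exact one_ne_zero
  · exact neg_ne_zero.mpr one_ne_zero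

lemma eps_sq (a : A) (i : V) : eps k src a i * eps k src a i = 1 := by
  unfold eps; split_ifs <;> ring

lemma eps_prod {a : A} {i j : V} (hij : i ≠ j)
    (hi : inc src tgt a i) (hj : inc src tgt a j) :
    eps k src a i * eps k src a j = -1 := by
  rcases endpoints hij hi hj with ⟨h1, h2⟩ | ⟨h1, h2⟩
  · simp [eps, h1, hij]
  · simp [eps, h1, Ne.symm hij]

lemma exists_inc (hnoiso : ∀ e : V, 0 < deg src tgt e) (j : V) :
    ∃ a, inc src tgt a j := by
  obtain ⟨a, ha⟩ := Finset.card_pos.mp (hnoiso j)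
  exact ⟨a, (Finset.mem_filter.mp ha).2⟩

lemma two_inc {j : V} (hdeg : 2 ≤ deg src tgt j) :
    ∃ a b : A, a ≠ b ∧ inc src tgt a j ∧ inc src tgt b j := by
  obtain ⟨a, ha, b, hb, hab⟩ := Finset.one_lt_card.mp hdeg
  exact ⟨a, b, hab, (Finset.mem_filter.mp ha).2, (Finset.mem_filter.mp hb).2⟩

/-- the key combinatorial lemma: degrees ≥ 2 force the mixed block to vanish -/
lemma dzero (hloop : ∀ a, src a ≠ tgt a)
    (hsimple : ∀ a b : A,
      (src a = src b ∧ tgt a = tgt b) ∨ (src a = tgt b ∧ tgt a = src b) → a = b)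
    (hdeg : ∀ e : V, 2 ≤ deg src tgt e)
    (d : V → A → k)
    (M : ∀ (i : V) (a b : A),
      (if inc src tgt a i then eps k src a i * d (oth src tgt a i) b else 0) =
      (if inc src tgt b i then eps k src b i * d (oth src tgt b i) a else 0)) :
    ∀ (j : V) (b : A), d j b = 0 := by
  have C1 : ∀ (x : V) (e a : A) (i : V), inc src tgt a i → oth src tgt a i = x →
      ¬ inc src tgt e i → d x e = 0 := by
    intro x e a i hai hoth hne
    have h := M i a e
    rw [if_pos hai, if_neg hne, hoth] at h
    exact (mul_eq_zero.mp h).resolve_left (eps_ne_zero a i)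
  have C2 : ∀ (i : V) (a a' : A), inc src tgt a i → inc src tgt a' i →
      eps k src a i * d (oth src tgt a i) a' = eps k src a' i * d (oth src tgt a' i) a := by
    intro i a a' h h'
    have hM := M i a a'
    rwa [if_pos h, if_pos h'] at hM
  intro j b
  by_cases hout : ∃ a i, inc src tgt a i ∧ oth src tgt a i = j ∧ ¬ inc src tgt b i
  · obtain ⟨a, i, hai, hoth, hnbi⟩ := hout
    exact C1 j b a i hai hoth hnbi
  · push_neg at hout
    -- every neighbour of j is incident to b
    have hko : ∀ a : A, inc src tgt a j → inc src tgt b (oth src tgt a j) := fun a ha =>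
      hout a (oth src tgt a j) (inc_oth hloop ha) (oth_oth hloop ha)
    obtain ⟨a1, a2, h12, ha1, ha2⟩ := two_inc (hdeg j)
    by_cases hjb : inc src tgt b j
    · exfalso
      have hw : ∀ a : A, inc src tgt a j → oth src tgt a j = oth src tgt b j := by
        intro a ha
        exact (oth_eq (Ne.symm (oth_ne hloop ha)) hjb (hko a ha)).symm
      apply h12
      refine shareEdge hsimple (Ne.symm (oth_ne hloop hjb) : j ≠ oth src tgt b j) ha1 ?_ ha2 ?_
      · rw [← hw a1 ha1]; exact inc_oth hloop ha1
      · rw [← hw a2 ha2]; exact inc_oth hloop ha2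
    · -- j not on b; two distinct neighbours u, v of j, both on b
      set u := oth src tgt a1 j with hu
      set v := oth src tgt a2 j with hv
      have hbu : inc src tgt b u := hko a1 ha1
      have hbv : inc src tgt b v := hko a2 ha2
      have hju : j ≠ u := Ne.symm (oth_ne hloop ha1)
      have hjv : j ≠ v := Ne.symm (oth_ne hloop ha2)
      have huv : u ≠ v := by
        intro h
        refine h12 (shareEdge hsimple hju ha1 (inc_oth hloop ha1) ha2 ?_)
        rw [h]; exact inc_oth hloop ha2
      have ha1u : inc src tgt a1 u := inc_oth hloop ha1
      have ha2v : inc src tgt a2 v := inc_oth hloop ha2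
      have hoth_a1u : oth src tgt a1 u = j := by rw [hu]; exact oth_oth hloop ha1
      have hoth_a2v : oth src tgt a2 v = j := by rw [hv]; exact oth_oth hloop ha2
      have hothbu : oth src tgt b u = v := oth_eq huv hbu hbv
      have hothbv : oth src tgt b v = u := oth_eq (Ne.symm huv) hbv hbu
      set X := d j b with hX
      set Y := d u a2 with hYd
      set Z := d v a1 with hZd
      set p1 := eps k src a1 u
      set p2 := eps k src a1 j
      set q1 := eps k src a2 v
      set q2 := eps k src a2 j
      set r1 := eps k src b u
      set r2 := eps k src b v
      have eq1 : p1 * X = r1 * Z := by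
        have := C2 u a1 b ha1u hbu; rwa [hoth_a1u, hothbu] at this
      have eq2 : q1 * X = r2 * Y := by
        have := C2 v a2 b ha2v hbv; rwa [hoth_a2v, hothbv] at this
      have eq3 : p2 * Y = q2 * Z := by
        have := C2 j a1 a2 ha1 ha2; rwa [← hu, ← hv] at this
      have hpq : p1 * p2 = -1 := eps_prod (Ne.symm hju) ha1u ha1
      have hqq : q1 * q2 = -1 := eps_prod (Ne.symm hjv) ha2v ha2
      have hrr : r1 * r2 = -1 := eps_prod huv hbu hbv
      have sq_p2 : p2 * p2 = 1 := eps_sq a1 j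
      have sq_q1 : q1 * q1 = 1 := eps_sq a2 v
      have sq_r1 : r1 * r1 = 1 := eps_sq b u
      have sq_r2 : r2 * r2 = 1 := eps_sq b v
      have hZ : Z = r1 * p1 * X := by linear_combination (-r1) * eq1 + (-Z) * sq_r1
      have hY : Y = r2 * q1 * X := by linear_combination (-r2) * eq2 + (-Y) * sq_r2
      have heq : (p2*q1*r2) * X = (q2*p1*r1) * X := by
        linear_combination eq3 - p2 * hY + q2 * hZ
      have hts : (p2*q1*r2) * (q2*p1*r1) = -1 := by
        linear_combination (q1*q2*r1*r2) * hpq - (r1*r2) * hqq + hrr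
      have htt : (p2*q1*r2) * (p2*q1*r2) = 1 := by
        linear_combination (q1*q1*r2*r2) * sq_p2 + (r2*r2) * sq_q1 + sq_r2
      have hst : (q2*p1*r1) = -(p2*q1*r2) := by
        linear_combination (p2*q1*r2) * hts - (q2*p1*r1) * htt
      have h2 : (p2*q1*r2) * X + (p2*q1*r2) * X = 0 := by
        linear_combination heq + X * hst
      have hT : (p2*q1*r2) * X = 0 := add_self_eq_zero.mp h2
      have hXf : X = (p2*q1*r2) * ((p2*q1*r2) * X) := by linear_combination (-X) * htt
      rw [hT, mul_zero] at hXf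
      exact hXf

end Graph

section Lie
variable {k V A N : Type*} [Field k] [CharZero k]
  [Fintype V] [Fintype A] [DecidableEq V] [DecidableEq A]
  [LieRing N] [LieAlgebra k N]
  (src tgt : A → V) (B : Module.Basis (V ⊕ A) k N)

lemma coord_basis' (p q : V ⊕ A) : B.coord p (B q) = if q = p then 1 else 0 := by
  simp [Module.Basis.coord_apply, Module.Basis.repr_self, Finsupp.single_apply]

section
variable (hloop : ∀ a, src a ≠ tgt a)
    (hsimple : ∀ a b : A,
      (src a = src b ∧ tgt a = tgt b) ∨ (src a = tgt b ∧ tgt a = src b) → a = b)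
    (hbz : ∀ (a : A) (x : N), ⁅B (Sum.inr a), x⁆ = 0)
    (hbe : ∀ a : A, ⁅B (Sum.inl (src a)), B (Sum.inl (tgt a))⁆ = B (Sum.inr a))
    (hbe0 : ∀ i j : V,
      (∀ a : A, ¬((src a = i ∧ tgt a = j) ∨ (src a = j ∧ tgt a = i))) →
      ⁅B (Sum.inl i), B (Sum.inl j)⁆ = 0)

include hbz in
lemma brkz (x : N) (a : A) : ⁅x, B (Sum.inr a)⁆ = 0 := by
  rw [← lie_skew, hbz, neg_zero]

include hbe hbe0 in
lemma brk_desc (i j : V) :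
    (∃ a, src a = i ∧ tgt a = j ∧ ⁅B (Sum.inl i), B (Sum.inl j)⁆ = B (Sum.inr a)) ∨
    (∃ a, src a = j ∧ tgt a = i ∧ ⁅B (Sum.inl i), B (Sum.inl j)⁆ = -B (Sum.inr a)) ∨
    ((∀ a : A, ¬((src a = i ∧ tgt a = j) ∨ (src a = j ∧ tgt a = i))) ∧
      ⁅B (Sum.inl i), B (Sum.inl j)⁆ = 0) := by
  by_cases h : ∃ a, src a = i ∧ tgt a = j
  · obtain ⟨a, h1, h2⟩ := h
    exact Or.inl ⟨a, h1, h2, by rw [← h1, ← h2]; exact hbe a⟩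
  · by_cases h' : ∃ a, src a = j ∧ tgt a = i
    · obtain ⟨a, h1, h2⟩ := h'
      refine Or.inr (Or.inl ⟨a, h1, h2, ?_⟩)
      rw [← lie_skew, ← h1, ← h2, hbe a]
    · refine Or.inr (Or.inr ⟨?_, ?_⟩)
      · intro a hc
        rcases hc with hc | hc
        · exact h ⟨a, hc⟩
        · exact h' ⟨a, hc⟩
      · apply hbe0
        intro a hc
        rcases hc with hc | hc
        · exact h ⟨a, hc⟩
        · exact h' ⟨a, hc⟩

include hbz hbe hbe0 in
lemma coord_inl_ad (i m : V) :
    (B.coord (Sum.inl m)) ∘ₗ (LieAlgebra.ad k N (B (Sum.inl i))) = 0 := by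
  refine Module.Basis.ext B fun p => ?_
  rcases p with j | a
  · simp only [LinearMap.comp_apply, LieAlgebra.ad_apply, LinearMap.zero_apply]
    rcases brk_desc src tgt B hbe hbe0 i j with ⟨a, _, _, he⟩ | ⟨a, _, _, he⟩ | ⟨_, he⟩ <;>
      rw [he] <;> simp [coord_basis']
  · simp only [LinearMap.comp_apply, LieAlgebra.ad_apply, LinearMap.zero_apply,
      brkz B hbz, map_zero]

include hloop hsimple hbz hbe hbe0 in
lemma coord_inr_ad_src {a : A} {i : V} (ha : src a = i) :
    (B.coord (Sum.inr a)) ∘ₗ (LieAlgebra.ad k N (B (Sum.inl i))) =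
      B.coord (Sum.inl (tgt a)) := by
  refine Module.Basis.ext B fun p => ?_
  rcases p with j | b
  · simp only [LinearMap.comp_apply, LieAlgebra.ad_apply]
    rcases brk_desc src tgt B hbe hbe0 i j with ⟨b, h1, h2, he⟩ | ⟨b, h1, h2, he⟩ | ⟨hn, he⟩
    · rw [he, coord_basis', coord_basis']
      simp only [Sum.inr.injEq, Sum.inl.injEq]
      by_cases hb : b = a
      · subst hb
        rw [if_pos rfl, if_pos (by rw [h2])]
      · rw [if_neg hb, if_neg]
        intro hc
        subst hc
        exact hb (hsimple b a (Or.inl ⟨h1.trans ha.symm, h2⟩))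
    · rw [he, map_neg, coord_basis', coord_basis']
      simp only [Sum.inr.injEq, Sum.inl.injEq]
      have hb : b ≠ a := by
        intro hc
        exact hloop a (by rw [ha, ← h2, hc])
      rw [if_neg hb, if_neg, neg_zero]
      intro hc
      subst hc
      exact hb (hsimple b a (Or.inr ⟨h1, h2.trans ha.symm⟩))
    · rw [he, map_zero, coord_basis']
      simp only [Sum.inl.injEq]
      rw [if_neg]
      intro hc
      subst hc
      exact hn a (Or.inl ⟨ha, rfl⟩)
  · simp only [LinearMap.comp_apply, LieAlgebra.ad_apply, brkz B hbz, map_zero, coord_basis']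
    rw [if_neg (by simp)]

include hloop hsimple hbz hbe hbe0 in
lemma coord_inr_ad_tgt {a : A} {i : V} (ha : tgt a = i) :
    (B.coord (Sum.inr a)) ∘ₗ (LieAlgebra.ad k N (B (Sum.inl i))) =
      -(B.coord (Sum.inl (src a))) := by
  refine Module.Basis.ext B fun p => ?_
  rcases p with j | b
  · simp only [LinearMap.comp_apply, LieAlgebra.ad_apply, LinearMap.neg_apply]
    rcases brk_desc src tgt B hbe hbe0 i j with ⟨b, h1, h2, he⟩ | ⟨b, h1, h2, he⟩ | ⟨hn, he⟩
    · rw [he, coord_basis', coord_basis']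
      simp only [Sum.inr.injEq, Sum.inl.injEq]
      have hb : b ≠ a := by
        intro hc
        exact hloop a (by rw [← hc, h1, ← ha, hc])
      rw [if_neg hb, if_neg, neg_zero]
      intro hc
      subst hc
      exact hb (hsimple b a (Or.inr ⟨h1.trans ha.symm, h2⟩))
    · rw [he, map_neg, coord_basis', coord_basis']
      simp only [Sum.inr.injEq, Sum.inl.injEq]
      by_cases hb : b = a
      · subst hb
        rw [if_pos rfl, if_pos (by rw [h1])]
      · rw [if_neg hb, if_neg, neg_zero]
        intro hc
        subst hc
        exact hb (hsimple b a (Or.inl ⟨h1, h2.trans ha.symm⟩))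
    · rw [he, map_zero, coord_basis']
      simp only [Sum.inl.injEq]
      rw [if_neg, neg_zero]
      intro hc
      subst hc
      exact hn a (Or.inr ⟨rfl, ha⟩)
  · simp only [LinearMap.comp_apply, LieAlgebra.ad_apply, brkz B hbz, map_zero,
      LinearMap.neg_apply, coord_basis']
    rw [if_neg (by simp), neg_zero]

include hbz hbe hbe0 in
lemma coord_inr_ad_non {a : A} {i : V} (h1 : src a ≠ i) (h2 : tgt a ≠ i) :
    (B.coord (Sum.inr a)) ∘ₗ (LieAlgebra.ad k N (B (Sum.inl i))) = 0 := by
  refine Module.Basis.ext B fun p => ?_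
  rcases p with j | b
  · simp only [LinearMap.comp_apply, LieAlgebra.ad_apply, LinearMap.zero_apply]
    rcases brk_desc src tgt B hbe hbe0 i j with ⟨b, hb1, hb2, he⟩ | ⟨b, hb1, hb2, he⟩ | ⟨hn, he⟩
    · rw [he, coord_basis']
      simp only [Sum.inr.injEq]
      rw [if_neg]
      intro hc
      subst hc
      exact h1 hb1
    · rw [he, map_neg, coord_basis']
      simp only [Sum.inr.injEq]
      rw [if_neg, neg_zero]
      intro hc
      subst hc
      exact h2 hb2
    · rw [he, map_zero]
  · simp only [LinearMap.comp_apply, LieAlgebra.ad_apply, brkz B hbz, map_zero,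
      LinearMap.zero_apply]

include hbz in
lemma ad_inr (a : A) : LieAlgebra.ad k N (B (Sum.inr a)) = 0 := by
  ext x; simp [LieAlgebra.ad_apply, hbz]

end
end Lie


section T
variable {k V A N : Type*} [Field k] [CharZero k]
  [Fintype V] [Fintype A] [DecidableEq V] [DecidableEq A]
  [LieRing N] [LieAlgebra k N]
  (B : Module.Basis (V ⊕ A) k N)

noncomputable def phi (p q : V ⊕ A) : N ⊗[k] N →ₗ[k] k :=
  (LinearMap.mul' k k) ∘ₗ (TensorProduct.map (B.coord p) (B.coord q))

lemma phi_tmul (p q : V ⊕ A) (x y : N) :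
    phi B p q (x ⊗ₜ y) = B.coord p x * B.coord q y := by
  simp [phi, LinearMap.mul'_apply]

lemma tAct_tmul (x u v : N) :
    tAct k N x (u ⊗ₜ v) = ⁅x, u⁆ ⊗ₜ v + u ⊗ₜ[k] ⁅x, v⁆ := by
  simp [tAct, LieAlgebra.ad_apply]

lemma phi_tAct (p q : V ⊕ A) (x : N) (ω : N ⊗[k] N) :
    phi B p q (tAct k N x ω) =
      ((LinearMap.mul' k k) ∘ₗ
        TensorProduct.map ((B.coord p) ∘ₗ LieAlgebra.ad k N x) (B.coord q)) ω +
      ((LinearMap.mul' k k) ∘ₗ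
        TensorProduct.map (B.coord p) ((B.coord q) ∘ₗ LieAlgebra.ad k N x)) ω := by
  induction ω with
  | zero => simp
  | tmul u v =>
      rw [tAct_tmul]
      simp only [map_add, phi_tmul, LinearMap.comp_apply, TensorProduct.map_tmul,
        LinearMap.mul'_apply, LieAlgebra.ad_apply]
  | add s t hs ht =>
      rw [map_add, map_add, hs, ht]
      simp only [map_add]
      ring

lemma mulmap_phi (p q : V ⊕ A) (ω : N ⊗[k] N) :
    ((LinearMap.mul' k k) ∘ₗ TensorProduct.map (B.coord p) (B.coord q)) ω = phi B p q ω := rfl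

lemma mulmap_negL (f g : N →ₗ[k] k) (ω : N ⊗[k] N) :
    ((LinearMap.mul' k k) ∘ₗ TensorProduct.map (-f) g) ω =
      -(((LinearMap.mul' k k) ∘ₗ TensorProduct.map f g) ω) := by
  induction ω with
  | zero => simp
  | tmul u v => simp [LinearMap.mul'_apply]
  | add s t hs ht => simp only [map_add, hs, ht]; ring

lemma mulmap_negR (f g : N →ₗ[k] k) (ω : N ⊗[k] N) :
    ((LinearMap.mul' k k) ∘ₗ TensorProduct.map f (-g)) ω =
      -(((LinearMap.mul' k k) ∘ₗ TensorProduct.map f g) ω) := by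
  induction ω with
  | zero => simp
  | tmul u v => simp [LinearMap.mul'_apply]
  | add s t hs ht => simp only [map_add, hs, ht]; ring

lemma mulmap_zeroL (g : N →ₗ[k] k) (ω : N ⊗[k] N) :
    ((LinearMap.mul' k k) ∘ₗ TensorProduct.map (0 : N →ₗ[k] k) g) ω = 0 := by
  induction ω with
  | zero => simp
  | tmul u v => simp [LinearMap.mul'_apply]
  | add s t hs ht => simp only [map_add, hs, ht]; ring

lemma mulmap_zeroR (f : N →ₗ[k] k) (ω : N ⊗[k] N) :
    ((LinearMap.mul' k k) ∘ₗ TensorProduct.map f (0 : N →ₗ[k] k)) ω = 0 := by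
  induction ω with
  | zero => simp
  | tmul u v => simp [LinearMap.mul'_apply]
  | add s t hs ht => simp only [map_add, hs, ht]; ring

lemma phi_comm (p q : V ⊕ A) (ω : N ⊗[k] N) :
    phi B p q (TensorProduct.comm k N N ω) = phi B q p ω := by
  induction ω with
  | zero => simp
  | tmul u v => simp [phi_tmul, mul_comm]
  | add s t hs ht => simp only [map_add, hs, ht]

lemma phi_eq_repr (p q : V ⊕ A) (ω : N ⊗[k] N) :
    phi B p q ω = (B.tensorProduct B).repr ω (p, q) := by
  induction ω with
  | zero => simp
  | tmul x y =>
      rw [phi_tmul, Module.Basis.tensorProduct_repr_tmul_apply]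
      simp [Module.Basis.coord_apply, mul_comm, smul_eq_mul]
  | add x y hx hy => simp [map_add, hx, hy]

lemma coord_vanish_span (m : V) :
    ∀ z ∈ Submodule.span k (Set.range fun a : A => B (Sum.inr a)),
      B.coord (Sum.inl m) z = 0 := by
  intro z hz
  have : Submodule.span k (Set.range fun a : A => B (Sum.inr a)) ≤
      LinearMap.ker (B.coord (Sum.inl m)) := by
    rw [Submodule.span_le]
    rintro _ ⟨a, rfl⟩
    simp [LinearMap.mem_ker, Module.Basis.coord_apply, Module.Basis.repr_self, Finsupp.single_apply]
  exact this hz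

lemma phi_vanish_left (m : V) (q : V ⊕ A) (ω : N ⊗[k] N)
    (hω : ω ∈ tsub k N (Submodule.span k (Set.range fun a : A => B (Sum.inr a)))
        (Submodule.span k (Set.range fun a : A => B (Sum.inr a)))) :
    phi B (Sum.inl m) q ω = 0 := by
  obtain ⟨t, rfl⟩ := hω
  induction t with
  | zero => simp
  | tmul x y =>
      rw [TensorProduct.map_tmul, phi_tmul, Submodule.coe_subtype,
        coord_vanish_span B m x.1 x.2, zero_mul]
  | add s t hs ht => rw [map_add, map_add, hs, ht, add_zero]

lemma phi_vanish_right (m : V) (p : V ⊕ A) (ω : N ⊗[k] N)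
    (hω : ω ∈ tsub k N (Submodule.span k (Set.range fun a : A => B (Sum.inr a)))
        (Submodule.span k (Set.range fun a : A => B (Sum.inr a)))) :
    phi B p (Sum.inl m) ω = 0 := by
  obtain ⟨t, rfl⟩ := hω
  induction t with
  | zero => simp
  | tmul x y =>
      rw [TensorProduct.map_tmul, phi_tmul, Submodule.coe_subtype,
        coord_vanish_span B m y.1 y.2, mul_zero]
  | add s t hs ht => rw [map_add, map_add, hs, ht, add_zero]

lemma mem_tsub_of_coords (ω : N ⊗[k] N)
    (h1 : ∀ (j : V) (q : V ⊕ A), phi B (Sum.inl j) q ω = 0)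
    (h2 : ∀ (p : V ⊕ A) (j : V), phi B p (Sum.inl j) ω = 0) :
    ω ∈ tsub k N (Submodule.span k (Set.range fun a : A => B (Sum.inr a)))
        (Submodule.span k (Set.range fun a : A => B (Sum.inr a))) := by
  rw [← Module.Basis.sum_repr (B.tensorProduct B) ω]
  apply Submodule.sum_mem
  rintro ⟨p, q⟩ -
  rcases p with j | a
  · rw [← phi_eq_repr, h1, zero_smul]
    exact Submodule.zero_mem _
  · rcases q with j | b
    · rw [← phi_eq_repr, h2, zero_smul]
      exact Submodule.zero_mem _
    · apply Submodule.smul_mem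
      rw [Module.Basis.tensorProduct_apply]
      exact ⟨⟨B (Sum.inr a), Submodule.subset_span ⟨a, rfl⟩⟩ ⊗ₜ
          ⟨B (Sum.inr b), Submodule.subset_span ⟨b, rfl⟩⟩, by
        rw [TensorProduct.map_tmul]; rfl⟩

lemma tAct_vanish_tsub (hbz : ∀ (a : A) (x : N), ⁅B (Sum.inr a), x⁆ = 0)
    (x : N) (ω : N ⊗[k] N)
    (hω : ω ∈ tsub k N (Submodule.span k (Set.range fun a : A => B (Sum.inr a)))
        (Submodule.span k (Set.range fun a : A => B (Sum.inr a)))) :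
    tAct k N x ω = 0 := by
  have hbr : ∀ z ∈ Submodule.span k (Set.range fun a : A => B (Sum.inr a)), ⁅x, z⁆ = 0 := by
    intro z hz
    have : Submodule.span k (Set.range fun a : A => B (Sum.inr a)) ≤
        LinearMap.ker (LieAlgebra.ad k N x) := by
      rw [Submodule.span_le]
      rintro _ ⟨a, rfl⟩
      simp only [SetLike.mem_coe, LinearMap.mem_ker, LieAlgebra.ad_apply]
      rw [← lie_skew, hbz, neg_zero]
    simpa using this hz
  obtain ⟨t, rfl⟩ := hω
  induction t with
  | zero => simp
  | tmul u v =>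
      rw [TensorProduct.map_tmul, tAct_tmul, Submodule.coe_subtype,
        hbr u.1 u.2, hbr v.1 v.2, TensorProduct.zero_tmul, TensorProduct.tmul_zero,
        add_zero]
  | add s t hs ht => rw [map_add, map_add, hs, ht, add_zero]

end T


section Master
variable {k V A N : Type*} [Field k] [CharZero k]
  [Fintype V] [Fintype A] [DecidableEq V] [DecidableEq A]
  [LieRing N] [LieAlgebra k N]
  (src tgt : A → V) (B : Module.Basis (V ⊕ A) k N)

lemma formL (i : V) (a : A) (F : V → k) :
    (if inc src tgt a i then eps k src a i * F (oth src tgt a i) else 0) =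
    (if src a = i then F (tgt a) else if tgt a = i then -(F (src a)) else 0) := by
  by_cases h1 : src a = i
  · simp [inc, eps, oth, h1]
  · by_cases h2 : tgt a = i
    · simp [inc, eps, oth, h1, h2]
    · simp [inc, eps, oth, h1, h2]

section
variable (hloop : ∀ a, src a ≠ tgt a)
    (hsimple : ∀ a b : A,
      (src a = src b ∧ tgt a = tgt b) ∨ (src a = tgt b ∧ tgt a = src b) → a = b)
    (hbz : ∀ (a : A) (x : N), ⁅B (Sum.inr a), x⁆ = 0)
    (hbe : ∀ a : A, ⁅B (Sum.inl (src a)), B (Sum.inl (tgt a))⁆ = B (Sum.inr a))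
    (hbe0 : ∀ i j : V,
      (∀ a : A, ¬((src a = i ∧ tgt a = j) ∨ (src a = j ∧ tgt a = i))) →
      ⁅B (Sum.inl i), B (Sum.inl j)⁆ = 0)

include hloop hsimple hbz hbe hbe0 in
lemma term1_eq (i : V) (a : A) (q : V ⊕ A) (ω : N ⊗[k] N) :
    ((LinearMap.mul' k k) ∘ₗ
      TensorProduct.map ((B.coord (Sum.inr a)) ∘ₗ LieAlgebra.ad k N (B (Sum.inl i)))
        (B.coord q)) ω =
    (if src a = i then phi B (Sum.inl (tgt a)) q ω
      else if tgt a = i then -(phi B (Sum.inl (src a)) q ω) else 0) := by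
  by_cases h1 : src a = i
  · rw [if_pos h1, coord_inr_ad_src src tgt B hloop hsimple hbz hbe hbe0 h1, mulmap_phi]
  · by_cases h2 : tgt a = i
    · rw [if_neg h1, if_pos h2, coord_inr_ad_tgt src tgt B hloop hsimple hbz hbe hbe0 h2,
        mulmap_negL, mulmap_phi]
    · rw [if_neg h1, if_neg h2, coord_inr_ad_non src tgt B hbz hbe hbe0 h1 h2, mulmap_zeroL]

include hloop hsimple hbz hbe hbe0 in
lemma term2_eq (i : V) (b : A) (p : V ⊕ A) (ω : N ⊗[k] N) :
    ((LinearMap.mul' k k) ∘ₗ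
      TensorProduct.map (B.coord p)
        ((B.coord (Sum.inr b)) ∘ₗ LieAlgebra.ad k N (B (Sum.inl i)))) ω =
    (if src b = i then phi B p (Sum.inl (tgt b)) ω
      else if tgt b = i then -(phi B p (Sum.inl (src b)) ω) else 0) := by
  by_cases h1 : src b = i
  · rw [if_pos h1, coord_inr_ad_src src tgt B hloop hsimple hbz hbe hbe0 h1, mulmap_phi]
  · by_cases h2 : tgt b = i
    · rw [if_neg h1, if_pos h2, coord_inr_ad_tgt src tgt B hloop hsimple hbz hbe hbe0 h2,
        mulmap_negR, mulmap_phi]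
    · rw [if_neg h1, if_neg h2, coord_inr_ad_non src tgt B hbz hbe hbe0 h1 h2, mulmap_zeroR]

include hbz hbe hbe0 in
lemma term2z_eq (i m : V) (p : V ⊕ A) (ω : N ⊗[k] N) :
    ((LinearMap.mul' k k) ∘ₗ
      TensorProduct.map (B.coord p)
        ((B.coord (Sum.inl m)) ∘ₗ LieAlgebra.ad k N (B (Sum.inl i)))) ω = 0 := by
  rw [coord_inl_ad src tgt B hbz hbe hbe0 i m, mulmap_zeroR]

include hloop hsimple hbz hbe hbe0 in
lemma master2 (ω : N ⊗[k] N) (hskew : TensorProduct.comm k N N ω = -ω)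
    (hinv : ∀ x : N, tAct k N x ω = 0) (i : V) (a b : A) :
    (if inc src tgt a i then
        eps k src a i * phi B (Sum.inl (oth src tgt a i)) (Sum.inr b) ω else 0) =
    (if inc src tgt b i then
        eps k src b i * phi B (Sum.inl (oth src tgt b i)) (Sum.inr a) ω else 0) := by
  have skew' : ∀ (m : V) (a' : A),
      phi B (Sum.inr a') (Sum.inl m) ω = -(phi B (Sum.inl m) (Sum.inr a') ω) := by
    intro m a'
    have h := phi_comm B (Sum.inr a') (Sum.inl m) ω
    rw [hskew, map_neg] at h
    exact neg_eq_iff_eq_neg.mp h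
  have h0 := phi_tAct B (Sum.inr a) (Sum.inr b) (B (Sum.inl i)) ω
  rw [hinv, map_zero] at h0
  rw [term1_eq src tgt B hloop hsimple hbz hbe hbe0,
    term2_eq src tgt B hloop hsimple hbz hbe hbe0] at h0
  simp only [skew'] at h0
  rw [formL src tgt i a (fun m => phi B (Sum.inl m) (Sum.inr b) ω),
    formL src tgt i b (fun m => phi B (Sum.inl m) (Sum.inr a) ω)]
  split_ifs at h0 ⊢ <;> first | linear_combination h0 | linear_combination -h0

include hloop hsimple hbz hbe hbe0 in
lemma master1 (ω : N ⊗[k] N)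
    (hinv : ∀ x : N, tAct k N x ω = 0) (i : V) (a : A) (m : V) :
    (if inc src tgt a i then
        eps k src a i * phi B (Sum.inl (oth src tgt a i)) (Sum.inl m) ω else 0) = 0 := by
  have h0 := phi_tAct B (Sum.inr a) (Sum.inl m) (B (Sum.inl i)) ω
  rw [hinv, map_zero] at h0
  rw [term1_eq src tgt B hloop hsimple hbz hbe hbe0,
    term2z_eq src tgt B hbz hbe hbe0] at h0
  rw [formL src tgt i a (fun j => phi B (Sum.inl j) (Sum.inl m) ω)]
  split_ifs at h0 ⊢ <;> first | linear_combination h0 | linear_combination -h0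

end
end Master

/-- for the graph algebra `n = n(G) = W ⊕ z` of a finite simple graph
without isolated vertices, `(Λ²n)^n = Λ²z` (every antisymmetric invariant tensor lies in
`z ⊗ z`, and conversely) if and only if every vertex of `G` has degree at least 2. -/
theorem stmt10 (k V A N : Type*) [Field k] [CharZero k]
    [Fintype V] [Fintype A] [DecidableEq V] [DecidableEq A]
    [LieRing N] [LieAlgebra k N]
    (src tgt : A → V)
    (hloop : ∀ a, src a ≠ tgt a)
    (hsimple : ∀ a b : A,
      (src a = src b ∧ tgt a = tgt b) ∨ (src a = tgt b ∧ tgt a = src b) → a = b)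
    (B : Module.Basis (V ⊕ A) k N)
    (hbz : ∀ (a : A) (x : N), ⁅B (Sum.inr a), x⁆ = 0)
    (hbe : ∀ a : A, ⁅B (Sum.inl (src a)), B (Sum.inl (tgt a))⁆ = B (Sum.inr a))
    (hbe0 : ∀ i j : V,
      (∀ a : A, ¬((src a = i ∧ tgt a = j) ∨ (src a = j ∧ tgt a = i))) →
      ⁅B (Sum.inl i), B (Sum.inl j)⁆ = 0)
    (hnoiso : ∀ e : V, 0 < deg src tgt e) :
    (∀ ω : N ⊗[k] N, TensorProduct.comm k N N ω = -ω →
      ((∀ x : N, tAct k N x ω = 0) ↔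
        ω ∈ tsub k N (Submodule.span k (Set.range fun a : A => B (Sum.inr a)))
              (Submodule.span k (Set.range fun a : A => B (Sum.inr a)))))
    ↔ (∀ e : V, 2 ≤ deg src tgt e) := by
  constructor
  · -- if invariants are exactly Λ²z then all degrees ≥ 2
    intro H
    by_contra hdeg
    push_neg at hdeg
    obtain ⟨e, he⟩ := hdeg
    have h1 : deg src tgt e = 1 := by
      have := hnoiso e
      unfold deg at *
      omega
    obtain ⟨a0, ha0⟩ := Finset.card_eq_one.mp h1
    have hmemb : ∀ b : A, (src b = e ∨ tgt b = e) ↔ b = a0 := by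
      intro b
      have := Finset.ext_iff.mp ha0 b
      simpa using this
    set Ee := B (Sum.inl e) with hEe
    set Z0 := B (Sum.inr a0) with hZ0
    set ω := Ee ⊗ₜ[k] Z0 - Z0 ⊗ₜ[k] Ee with hw
    have hskew : TensorProduct.comm k N N ω = -ω := by
      rw [hw, map_sub]
      simp only [TensorProduct.comm_tmul]
      rw [neg_sub]
    have hbr : ∀ x : N, ⁅Ee, x⁆ ∈ Submodule.span k {Z0} := by
      intro x
      have hx : x ∈ Submodule.span k (Set.range B) := Module.Basis.mem_span B x
      have hle : Submodule.span k (Set.range B) ≤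
          Submodule.comap (LieAlgebra.ad k N Ee) (Submodule.span k {Z0}) := by
        rw [Submodule.span_le]
        rintro _ ⟨p, rfl⟩
        rcases p with j | b
        · simp only [SetLike.mem_coe, Submodule.mem_comap, LieAlgebra.ad_apply]
          rcases brk_desc src tgt B hbe hbe0 e j with
            ⟨b, hb1, hb2, heq⟩ | ⟨b, hb1, hb2, heq⟩ | ⟨-, heq⟩
          · have hb : b = a0 := (hmemb b).mp (Or.inl hb1)
            rw [heq, hb]
            exact Submodule.mem_span_singleton_self _
          · have hb : b = a0 := (hmemb b).mp (Or.inr hb2)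
            rw [heq, hb]
            exact Submodule.neg_mem _ (Submodule.mem_span_singleton_self _)
          · rw [heq]
            exact Submodule.zero_mem _
        · simp only [SetLike.mem_coe, Submodule.mem_comap, LieAlgebra.ad_apply]
          rw [brkz B hbz Ee b]
          exact Submodule.zero_mem _
      have := hle hx
      simpa only [Submodule.mem_comap, LieAlgebra.ad_apply] using this
    have hinv : ∀ x : N, tAct k N x ω = 0 := by
      intro x
      obtain ⟨t, ht⟩ : ∃ t : k, ⁅x, Ee⁆ = t • Z0 := by
        obtain ⟨s, hs⟩ := Submodule.mem_span_singleton.mp (hbr x)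
        exact ⟨-s, by rw [← lie_skew, ← hs, neg_smul]⟩
      have h2 : tAct k N x ω = ⁅x, Ee⁆ ⊗ₜ[k] Z0 - Z0 ⊗ₜ[k] ⁅x, Ee⁆ := by
        rw [hw, map_sub, tAct_tmul, tAct_tmul, brkz B hbz x a0]
        rw [TensorProduct.tmul_zero, TensorProduct.zero_tmul, add_zero, zero_add]
      rw [h2, ht]
      simp [TensorProduct.smul_tmul', TensorProduct.tmul_smul]
    have hmem := (H ω hskew).mp hinv
    have hval := phi_vanish_left B e (Sum.inr a0) ω hmem
    have hone : phi B (Sum.inl e) (Sum.inr a0) ω = 1 := by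
      rw [hw, map_sub, phi_tmul, phi_tmul, coord_basis' B, coord_basis' B,
        coord_basis' B, coord_basis' B]
      simp
    rw [hval] at hone
    exact zero_ne_one hone
  · intro hdeg ω hskew
    constructor
    · intro hinv
      have hd : ∀ (j : V) (b : A), phi B (Sum.inl j) (Sum.inr b) ω = 0 := by
        refine dzero hloop hsimple hdeg
          (fun j b => phi B (Sum.inl j) (Sum.inr b) ω) ?_
        intro i a b
        exact master2 src tgt B hloop hsimple hbz hbe hbe0 ω hskew hinv i a b
      have hg : ∀ (j m : V), phi B (Sum.inl j) (Sum.inl m) ω = 0 := by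
        intro j m
        obtain ⟨a, ha⟩ := exists_inc hnoiso j
        have hM := master1 src tgt B hloop hsimple hbz hbe hbe0 ω hinv
          (oth src tgt a j) a m
        rw [if_pos (inc_oth hloop ha), oth_oth hloop ha] at hM
        exact (mul_eq_zero.mp hM).resolve_left (eps_ne_zero a (oth src tgt a j))
      have skew' : ∀ (p q : V ⊕ A), phi B q p ω = -(phi B p q ω) := by
        intro p q
        have h := phi_comm B q p ω
        rw [hskew, map_neg] at h
        exact neg_eq_iff_eq_neg.mp h
      apply mem_tsub_of_coords
      · intro j q
        rcases q with m | b
        · exact hg j m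
        · exact hd j b
      · intro p j
        rcases p with m | b
        · exact hg m j
        · rw [skew' (Sum.inl j) (Sum.inr b), hd, neg_zero]
    · intro hmem x
      exact tAct_vanish_tsub B hbz x ω hmem
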